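/- Equivalence of the standard and context-dependent semantics for star-free EPDL: for any uncertainty map M and action sequence σ with U|^σ ≠ ∅, and every s ∈ U|^σ: (i) (M|^σ, s) ⟦π⟧ (M', s') if and only if there exists a computation sequence ω ∈ L(π) such that M' = M|^{σ r(ω)} and s →_{ω_σ} s'; and (ii) M|^σ, s ⊨ φ if and only if M, s ⊩_σ φ, for all star-free EPDL formulas φ and programs π. -/
import Mathlib


mutual
/-- Formulas of the star-free fragment EPDL⁻. -/
inductive SFForm (P A : Type) : Type
  | top : SFForm P A
  | atom : P → SFForm P A
  | neg : SFForm P A → SFForm P A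
  | and : SFForm P A → SFForm P A → SFForm P A
  | box : SFProg P A → SFForm P A → SFForm P A
  | know : SFForm P A → SFForm P A
/-- Star-free programs. -/
inductive SFProg (P A : Type) : Type
  | act : A → SFProg P A
  | test : SFForm P A → SFProg P A
  | seq : SFProg P A → SFProg P A → SFProg P A
  | choice : SFProg P A → SFProg P A → SFProg P A
end

/-- A step of a computation sequence: an action or a test. -/
inductive SFStep (P A : Type) : Type
  | act : A → SFStep P A
  | test : SFForm P A → SFStep P A

mutual
def sizeF {P A : Type} : SFForm P A → ℕ
  | .top => 1
  | .atom _ => 1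
  | .neg φ => sizeF φ + 1
  | .and φ ψ => sizeF φ + sizeF ψ + 1
  | .box π φ => sizeP π + sizeF φ + 1
  | .know φ => sizeF φ + 1
def sizeP {P A : Type} : SFProg P A → ℕ
  | .act _ => 1
  | .test φ => sizeF φ + 1
  | .seq π π' => sizeP π + sizeP π' + 1
  | .choice π π' => sizeP π + sizeP π' + 1
end

def sizeStep {P A : Type} : SFStep P A → ℕ
  | .act _ => 1
  | .test φ => sizeF φ + 1

def sizeW {P A : Type} (ω : List (SFStep P A)) : ℕ := (ω.map sizeStep).sum

/-- L(π): the set of computation sequences of π. -/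
def Lang {P A : Type} : SFProg P A → Set (List (SFStep P A))
  | .act a => {[SFStep.act a]}
  | .test φ => {[SFStep.test φ]}
  | .seq π π' => {ω | ∃ u ∈ Lang π, ∃ v ∈ Lang π', ω = u ++ v}
  | .choice π π' => Lang π ∪ Lang π'

/-- r(ω): the sequence of actions obtained by deleting all tests from ω. -/
def rActs {P A : Type} (ω : List (SFStep P A)) : List A :=
  ω.filterMap fun st => match st with | .act a => some a | .test _ => none

theorem lang_size {P A : Type} : ∀ (π : SFProg P A) (ω : List (SFStep P A)),
    ω ∈ Lang π → sizeW ω ≤ sizeP π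
  | .act a, ω, hω => by
      simp only [Lang, Set.mem_singleton_iff] at hω
      subst hω
      simp [sizeW, sizeStep, sizeP]
  | .test φ, ω, hω => by
      simp only [Lang, Set.mem_singleton_iff] at hω
      subst hω
      simp [sizeW, sizeStep, sizeP]
  | .seq π π', ω, hω => by
      simp only [Lang, Set.mem_setOf_eq] at hω
      obtain ⟨u, hu, v, hv, rfl⟩ := hω
      have h1 := lang_size π u hu
      have h2 := lang_size π' v hv
      simp only [sizeW, List.map_append, List.sum_append] at *
      simp only [sizeP]
      omega
  | .choice π π', ω, hω => by
      simp only [Lang, Set.mem_union] at hω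
      rcases hω with h | h
      · have := lang_size π ω h; simp only [sizeP]; omega
      · have := lang_size π' ω h; simp only [sizeP]; omega

theorem sizeF_pos {P A : Type} (φ : SFForm P A) : 1 ≤ sizeF φ := by
  cases φ <;> simp [sizeF]

theorem sizeP_pos {P A : Type} (π : SFProg P A) : 1 ≤ sizeP π := by
  cases π <;> simp [sizeP]

/-- A Kripke model with labelled relations. -/
structure Kripke (P A : Type) where
  S : Type
  R : A → S → S → Prop
  V : S → P → Prop

namespace Kripke
variable {P A : Type}
/-- U|^a -/
def img (N : Kripke P A) (a : A) (U : Set N.S) : Set N.S := {t | ∃ u ∈ U, N.R a u t}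
/-- Iterated update U|^σ along a sequence of actions. -/
def updU (N : Kripke P A) : Set N.S → List A → Set N.S
  | U, [] => U
  | U, a :: σ => N.updU (N.img a U) σ
end Kripke

mutual
/-- Standard semantics of EPDL⁻ at a pointed uncertainty map (over a fixed
Kripke model `N`, given by an uncertainty set and a state). -/
def sfSat {P A : Type} (N : Kripke P A) : Set N.S → N.S → SFForm P A → Prop
  | _, _, .top => True
  | _, s, .atom p => N.V s p
  | U, s, .neg φ => ¬ sfSat N U s φ
  | U, s, .and φ ψ => sfSat N U s φ ∧ sfSat N U s ψ
  | U, s, .box π φ => ∀ c : Set N.S × N.S, sfRel N π (U, s) c → sfSat N c.1 c.2 φ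
  | U, _, .know φ => ∀ u ∈ U, sfSat N U u φ
/-- The relation ⟦π⟧ between pointed uncertainty maps. -/
def sfRel {P A : Type} (N : Kripke P A) : SFProg P A → Set N.S × N.S → Set N.S × N.S → Prop
  | .act a, c, c' => c'.1 = N.img a c.1 ∧ N.R a c.2 c'.2
  | .test ψ, c, c' => c' = c ∧ sfSat N c.1 c.2 ψ
  | .seq π₁ π₂, c, c' => ∃ d, sfRel N π₁ c d ∧ sfRel N π₂ d c'
  | .choice π₁ π₂, c, c' => sfRel N π₁ c c' ∨ sfRel N π₂ c c'
end

mutual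
/-- Context-dependent semantics M,s ⊩_σ φ: `U` is the initial uncertainty set of
the uncertainty map M, `σ` records the actions executed so far. -/
def cSat {P A : Type} (N : Kripke P A) (U : Set N.S) : List A → N.S → SFForm P A → Prop
  | _, _, .top => True
  | _, s, .atom p => N.V s p
  | σ, s, .neg φ => ¬ cSat N U σ s φ
  | σ, s, .and φ ψ => cSat N U σ s φ ∧ cSat N U σ s ψ
  | σ, _, .know φ => ∀ v ∈ N.updU U σ, cSat N U σ v φ
  | σ, s, .box π φ => ∀ ω : List (SFStep P A), ω ∈ Lang π →
      ∀ t : N.S, cRel N U ω σ s t → cSat N U (σ ++ rActs ω) t φ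
termination_by σ s φ => sizeF φ
decreasing_by
  · simp only [sizeF]; omega
  · simp only [sizeF]; omega
  · simp only [sizeF]; omega
  · simp only [sizeF]; omega
  · have h1 := lang_size π ω (by assumption)
    have h2 := sizeF_pos φ
    simp only [sizeF]; omega
  · have h2 := sizeP_pos π
    simp only [sizeF]; omega

/-- The context-dependent relation s →_{ω_σ} t. -/
def cRel {P A : Type} (N : Kripke P A) (U : Set N.S) : List (SFStep P A) → List A → N.S → N.S → Prop
  | [], _, s, t => s = t
  | .act a :: ω, σ, s, t => ∃ s', N.R a s s' ∧ cRel N U ω (σ ++ [a]) s' t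
  | .test φ :: ω, σ, s, t => cSat N U σ s φ ∧ cRel N U ω σ s t
termination_by ω σ s t => sizeW ω
decreasing_by
  · simp only [sizeW, sizeStep, List.map_cons, List.sum_cons]; omega
  · simp only [sizeW, sizeStep, List.map_cons, List.sum_cons]; omega
  · simp only [sizeW, sizeStep, List.map_cons, List.sum_cons]; omega
end


theorem updU_append {P A : Type} (N : Kripke P A) :
    ∀ (σ τ : List A) (U : Set N.S), N.updU U (σ ++ τ) = N.updU (N.updU U σ) τ
  | [], τ, U => rfl
  | a :: σ, τ, U => by
      simp only [List.cons_append, Kripke.updU]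
      exact updU_append N σ τ _

@[simp] theorem rActs_nil {P A : Type} : rActs ([] : List (SFStep P A)) = [] := rfl
@[simp] theorem rActs_act {P A : Type} (a : A) (ω : List (SFStep P A)) :
    rActs (.act a :: ω) = a :: rActs ω := rfl
@[simp] theorem rActs_test {P A : Type} (φ : SFForm P A) (ω : List (SFStep P A)) :
    rActs (.test φ :: ω) = rActs ω := rfl
@[simp] theorem rActs_append {P A : Type} (u v : List (SFStep P A)) :
    rActs (u ++ v) = rActs u ++ rActs v := List.filterMap_append ..

@[simp] theorem cRel_nil {P A : Type} (N : Kripke P A) (U : Set N.S) (σ : List A) (s t : N.S) :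
    cRel N U [] σ s t ↔ s = t := by simp [cRel]
@[simp] theorem cRel_act {P A : Type} (N : Kripke P A) (U : Set N.S) (a : A)
    (ω : List (SFStep P A)) (σ : List A) (s t : N.S) :
    cRel N U (.act a :: ω) σ s t ↔ ∃ s', N.R a s s' ∧ cRel N U ω (σ ++ [a]) s' t := by
  simp [cRel]
@[simp] theorem cRel_test {P A : Type} (N : Kripke P A) (U : Set N.S) (φ : SFForm P A)
    (ω : List (SFStep P A)) (σ : List A) (s t : N.S) :
    cRel N U (.test φ :: ω) σ s t ↔ cSat N U σ s φ ∧ cRel N U ω σ s t := by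
  simp [cRel]

theorem cRel_append {P A : Type} (N : Kripke P A) (U : Set N.S) :
    ∀ (u v : List (SFStep P A)) (σ : List A) (s s' : N.S),
      cRel N U (u ++ v) σ s s' ↔ ∃ t, cRel N U u σ s t ∧ cRel N U v (σ ++ rActs u) t s'
  | [], v, σ, s, s' => by simp [cRel]
  | .act a :: u, v, σ, s, s' => by
      simp only [List.cons_append, cRel, rActs_act]
      constructor
      · rintro ⟨s'', h1, h2⟩
        rw [cRel_append N U u v] at h2
        obtain ⟨t, ht1, ht2⟩ := h2
        exact ⟨t, ⟨s'', h1, ht1⟩, by simpa [List.append_assoc] using ht2⟩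
      · rintro ⟨t, ⟨s'', h1, ht1⟩, ht2⟩
        refine ⟨s'', h1, ?_⟩
        rw [cRel_append N U u v]
        exact ⟨t, ht1, by simpa [List.append_assoc] using ht2⟩
  | .test φ :: u, v, σ, s, s' => by
      simp only [List.cons_append, cRel, rActs_test]
      rw [cRel_append N U u v]
      tauto

mutual
theorem relEq {P A : Type} (N : Kripke P A) (U : Set N.S) :
    ∀ (π : SFProg P A) (σ : List A) (s : N.S) (U' : Set N.S) (s' : N.S),
      sfRel N π (N.updU U σ, s) (U', s') ↔
        ∃ ω ∈ Lang π, U' = N.updU U (σ ++ rActs ω) ∧ cRel N U ω σ s s'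
  | .act a, σ, s, U', s' => by
      simp only [sfRel, Lang, Set.mem_singleton_iff]
      constructor
      · rintro ⟨h1, h2⟩
        refine ⟨[.act a], rfl, ?_, ?_⟩
        · simp only [rActs_act, rActs_nil, updU_append N σ [a] U]; exact h1
        · rw [cRel_act]; exact ⟨s', h2, (cRel_nil ..).mpr rfl⟩
      · rintro ⟨ω, rfl, h1, h2⟩
        rw [cRel_act] at h2
        obtain ⟨s'', h2, h3⟩ := h2
        rw [cRel_nil] at h3
        subst h3
        rw [updU_append] at h1
        exact ⟨h1, h2⟩
  | .test ψ, σ, s, U', s' => by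
      simp only [sfRel, Lang, Set.mem_singleton_iff, Prod.mk.injEq]
      have := satEq N U ψ σ s
      constructor
      · rintro ⟨⟨rfl, rfl⟩, h⟩
        refine ⟨[.test ψ], rfl, by simp, ?_⟩
        rw [cRel_test, cRel_nil]
        exact ⟨this.mp h, rfl⟩
      · rintro ⟨ω, rfl, h1, h2⟩
        rw [cRel_test, cRel_nil] at h2
        obtain ⟨h2, rfl⟩ := h2
        simp only [rActs_test, rActs_nil, List.append_nil] at h1
        exact ⟨⟨h1, rfl⟩, this.mpr h2⟩
  | .seq π₁ π₂, σ, s, U', s' => by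
      simp only [sfRel, Lang, Set.mem_setOf_eq]
      constructor
      · rintro ⟨⟨D, d⟩, h1, h2⟩
        rw [relEq N U π₁ σ s D d] at h1
        obtain ⟨u, hu, rfl, hcu⟩ := h1
        rw [relEq N U π₂ (σ ++ rActs u) d U' s'] at h2
        obtain ⟨v, hv, hU', hcv⟩ := h2
        refine ⟨u ++ v, ⟨u, hu, v, hv, rfl⟩, ?_, ?_⟩
        · rw [hU']; simp [List.append_assoc]
        · rw [cRel_append]; exact ⟨d, hcu, hcv⟩
      · rintro ⟨ω, ⟨u, hu, v, hv, rfl⟩, hU', hc⟩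
        rw [cRel_append] at hc
        obtain ⟨t, hcu, hcv⟩ := hc
        refine ⟨(N.updU U (σ ++ rActs u), t), ?_, ?_⟩
        · rw [relEq N U π₁ σ s]; exact ⟨u, hu, rfl, hcu⟩
        · rw [relEq N U π₂ (σ ++ rActs u) t U' s']
          exact ⟨v, hv, by rw [hU']; simp [List.append_assoc], hcv⟩
  | .choice π₁ π₂, σ, s, U', s' => by
      simp only [sfRel, Lang, Set.mem_union]
      rw [relEq N U π₁ σ s U' s', relEq N U π₂ σ s U' s']
      constructor
      · rintro (⟨ω, h, h2⟩ | ⟨ω, h, h2⟩)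
        · exact ⟨ω, Or.inl h, h2⟩
        · exact ⟨ω, Or.inr h, h2⟩
      · rintro ⟨ω, h | h, h2⟩
        · exact Or.inl ⟨ω, h, h2⟩
        · exact Or.inr ⟨ω, h, h2⟩
termination_by π _ _ _ _ => sizeP π
decreasing_by
  all_goals simp only [sizeP, sizeF]
  all_goals try omega
  all_goals (first | (have := sizeF_pos ψ; omega) | skip)

theorem satEq {P A : Type} (N : Kripke P A) (U : Set N.S) :
    ∀ (φ : SFForm P A) (σ : List A) (s : N.S),
      sfSat N (N.updU U σ) s φ ↔ cSat N U σ s φ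
  | .top, σ, s => by simp [sfSat, cSat]
  | .atom p, σ, s => by simp [sfSat, cSat]
  | .neg φ, σ, s => by
      simp only [sfSat, cSat]
      rw [satEq N U φ σ s]
  | .and φ ψ, σ, s => by
      simp only [sfSat, cSat]
      rw [satEq N U φ σ s, satEq N U ψ σ s]
  | .know φ, σ, s => by
      simp only [sfSat, cSat]
      exact forall₂_congr fun v _ => satEq N U φ σ v
  | .box π φ, σ, s => by
      simp only [sfSat, cSat]
      constructor
      · intro h ω hω t hc
        rw [← satEq N U φ (σ ++ rActs ω) t]
        exact h (N.updU U (σ ++ rActs ω), t)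
          ((relEq N U π σ s _ t).mpr ⟨ω, hω, rfl, hc⟩)
      · rintro h ⟨U', t⟩ hrel
        rw [relEq N U π σ s U' t] at hrel
        obtain ⟨ω, hω, rfl, hc⟩ := hrel
        rw [satEq N U φ (σ ++ rActs ω) t]
        exact h ω hω t hc
termination_by φ _ _ => sizeF φ
decreasing_by
  all_goals simp only [sizeP, sizeF]
  all_goals try omega
  all_goals have := sizeP_pos π
  all_goals try omega
  all_goals (have := lang_size π ω hω; omega)
end

/-- Equivalence of the standard and context-dependent semantics for
star-free EPDL: for any uncertainty map (N with uncertainty set U) and action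
sequence σ with U|^σ ≠ ∅, and every s ∈ U|^σ:
(i) (M|^σ, s) ⟦π⟧ (M', s') iff there is a computation sequence ω ∈ L(π) with
    M' = M|^{σ r(ω)} and s →_{ω_σ} s'; and
(ii) M|^σ, s ⊨ φ iff M, s ⊩_σ φ. -/
theorem standard_eq_context_semantics {P A : Type} [Countable P] [Countable A]
    (N : Kripke P A) (U : Set N.S) (σ : List A)
    (hne : (N.updU U σ).Nonempty) (s : N.S) (hs : s ∈ N.updU U σ) :
    (∀ (π : SFProg P A) (U' : Set N.S) (s' : N.S),
        sfRel N π (N.updU U σ, s) (U', s') ↔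
          ∃ ω ∈ Lang π, U' = N.updU U (σ ++ rActs ω) ∧ cRel N U ω σ s s') ∧
    (∀ φ : SFForm P A, sfSat N (N.updU U σ) s φ ↔ cSat N U σ s φ) := by
  exact ⟨fun π => relEq N U π σ s, fun φ => satEq N U φ σ s⟩
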